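/- If A is a cooperative (Metzler) n×n matrix and all principal minors of -A are positive, then every eigenvalue of A has negative real part (i.e., s(A) < 0). -/

import Mathlib

open Matrix

namespace MetzlerAux

variable {n : ℕ}

/-- The matrix which agrees with `M` on `S × S` (plus a diagonal perturbation `d` on `S`)
and is the identity outside `S`. -/
def pad (M : Matrix (Fin n) (Fin n) ℝ) (S : Finset (Fin n)) (d : Fin n → ℝ) :
    Matrix (Fin n) (Fin n) ℝ :=
  fun i j => (if i ∈ S ∧ j ∈ S then M i j else 0) +
    (if i = j then (if i ∈ S then d i else 1) else 0)

lemma det_pad_zero (M : Matrix (Fin n) (Fin n) ℝ) (S : Finset (Fin n)) :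
    (pad M S 0).det =
      (M.submatrix (Subtype.val : {x // x ∈ S} → Fin n)
        (Subtype.val : {x // x ∈ S} → Fin n)).det := by
  classical
  set e : {x : Fin n // x ∈ S} ⊕ {x : Fin n // ¬ x ∈ S} ≃ Fin n :=
    Equiv.sumCompl (fun x => x ∈ S) with he
  rw [← Matrix.det_submatrix_equiv_self e (pad M S 0)]
  have hblocks : (pad M S 0).submatrix e e =
      Matrix.fromBlocks
        (M.submatrix (Subtype.val : {x // x ∈ S} → Fin n) Subtype.val) 0 0 1 := by
    ext i j
    cases i with
    | inl i =>
      cases j with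
      | inl j =>
        simp only [pad, he, Equiv.sumCompl_apply_inl, Matrix.submatrix_apply, Matrix.fromBlocks_apply₁₁, i.2, j.2, and_self, if_true, Subtype.ext_iff]
        split_ifs <;> simp_all
      | inr j =>
        have : (i : Fin n) ≠ (j : Fin n) := by
          intro h; exact j.2 (h ▸ i.2)
        simp [pad, he, Equiv.sumCompl_apply_inl, Equiv.sumCompl_apply_inr, i.2, j.2, this]
    | inr i =>
      cases j with
      | inl j =>
        have : (i : Fin n) ≠ (j : Fin n) := by
          intro h; exact i.2 (h ▸ j.2)
        simp [pad, he, Equiv.sumCompl_apply_inl, Equiv.sumCompl_apply_inr, i.2, j.2, this]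
      | inr j =>
        simp [pad, he, Equiv.sumCompl_apply_inl, Equiv.sumCompl_apply_inr, i.2, Matrix.one_apply, Subtype.ext_iff]
  rw [hblocks, Matrix.det_fromBlocks_zero₂₁]
  simp


/-- If row `a` of `A` is the standard basis vector `e_a`, then changing column `a`
to `e_a` does not change the determinant. -/
lemma det_updateCol_of_row_single (A : Matrix (Fin n) (Fin n) ℝ) (a : Fin n)
    (h : ∀ j, A a j = if a = j then 1 else 0) :
    (A.updateCol a (fun i => if i = a then 1 else 0)).det = A.det := by
  classical
  rw [Matrix.det_apply', Matrix.det_apply']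
  apply Finset.sum_congr rfl
  intro σ _
  by_cases hσ : σ a = a
  · congr 1
    apply Finset.prod_congr rfl
    intro j _
    rw [Matrix.updateCol_apply]
    by_cases hj : j = a
    · subst hj; simp [hσ, h]
    · simp [hj]
  · have hja : σ.symm a ≠ a := by
      intro h'
      have := congrArg σ h'
      rw [Equiv.apply_symm_apply] at this
      exact hσ this.symm
    have h1 : ∏ i, A (σ i) i = 0 := by
      refine Finset.prod_eq_zero (Finset.mem_univ (σ.symm a)) ?_
      rw [Equiv.apply_symm_apply, h]
      exact if_neg (Ne.symm hja)
    have h2 : ∏ i, (A.updateCol a fun i => if i = a then 1 else 0) (σ i) i = 0 := by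
      refine Finset.prod_eq_zero (Finset.mem_univ (σ.symm a)) ?_
      rw [Matrix.updateCol_apply, if_neg hja, Equiv.apply_symm_apply, h]
      exact if_neg (Ne.symm hja)
    rw [h1, h2]

lemma updateRC_eq (M : Matrix (Fin n) (Fin n) ℝ) (S : Finset (Fin n)) (d : Fin n → ℝ)
    (a : Fin n) :
    ((pad M S d).updateRow a (fun j => if a = j then 1 else 0)).updateCol a
        (fun i => if i = a then 1 else 0) = pad M (S.erase a) d := by
  classical
  ext i j
  by_cases hj : j = a <;> by_cases hi : i = a <;>
    simp [pad, Matrix.updateCol_apply, Matrix.updateRow_apply, hi, hj,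
      Finset.mem_erase, Ne.symm, eq_comm]


lemma det_pad_pos (M : Matrix (Fin n) (Fin n) ℝ)
    (hminors : ∀ S : Finset (Fin n), S.Nonempty →
      0 < (M.submatrix (Subtype.val : {x // x ∈ S} → Fin n)
            (Subtype.val : {x // x ∈ S} → Fin n)).det)
    (S : Finset (Fin n)) (d : Fin n → ℝ) (hd : ∀ i ∈ S, 0 ≤ d i) :
    0 < (pad M S d).det := by
  classical
  induction S using Finset.strongInduction generalizing d with
  | _ S ih =>
  have key : ∀ T : Finset (Fin n), ∀ d : Fin n → ℝ, (∀ i ∈ S, 0 ≤ d i) →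
      (∀ i ∈ S, d i ≠ 0 → i ∈ T) → 0 < (pad M S d).det := by
    intro T
    induction T using Finset.induction_on with
    | empty =>
      intro d hd hsupp
      have hzero : pad M S d = pad M S 0 := by
        ext i j
        simp only [pad]
        by_cases hij : i = j
        · subst hij
          by_cases hiS : i ∈ S
          · have hdi : d i = 0 := by
              by_contra hne
              exact absurd (hsupp i hiS hne) (Finset.notMem_empty i)
            simp [hiS, hdi]
          · simp [hiS]
        · simp [hij]
      rw [hzero, det_pad_zero]
      rcases S.eq_empty_or_nonempty with hS | hS
      · subst hS
        haveI : IsEmpty {x : Fin n // x ∈ (∅ : Finset (Fin n))} :=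
          ⟨fun x => Finset.notMem_empty _ x.2⟩
        simp [Matrix.det_isEmpty]
      · exact hminors S hS
    | @insert a T haT ihT =>
      intro d hd hsupp
      by_cases hda : a ∈ S ∧ d a ≠ 0
      · obtain ⟨haS, hda0⟩ := hda
        have hdapos : 0 < d a := lt_of_le_of_ne (hd a haS) (Ne.symm hda0)
        set d' : Fin n → ℝ := Function.update d a 0 with hd'
        have hd'val : ∀ i, i ≠ a → d' i = d i := fun i hi =>
          Function.update_of_ne hi _ _
        have hd'a : d' a = 0 := Function.update_self _ _ _
        have hd'nonneg : ∀ i ∈ S, 0 ≤ d' i := by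
          intro i hi
          by_cases hia : i = a
          · subst hia; rw [hd'a]
          · rw [hd'val i hia]; exact hd i hi
        have hrow : pad M S d = (pad M S d').updateRow a
            (fun j => pad M S d' a j + d a * (if a = j then 1 else 0)) := by
          ext i j
          rw [Matrix.updateRow_apply]
          by_cases hia : i = a
          · subst hia
            simp only [if_pos rfl, pad]
            by_cases hij : i = j
            · subst hij
              simp [haS, hd'a]
            · simp [hij]
          · rw [if_neg hia]
            simp only [pad]
            by_cases hij : i = j
            · subst hij
              rw [hd'val i hia]
            · simp [hij]
        have hsplit : (pad M S d).det =
            (pad M S d').det + d a * ((pad M S d').updateRow a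
              (fun j => if a = j then 1 else 0)).det := by
          rw [hrow]
          have : (fun j => pad M S d' a j + d a * (if a = j then 1 else 0)) =
              (pad M S d' a) + (d a • fun j => if a = j then (1:ℝ) else 0) := by
            funext j; simp [Pi.add_apply, Pi.smul_apply, smul_eq_mul]
          rw [this, Matrix.det_updateRow_add, Matrix.updateRow_eq_self,
            Matrix.det_updateRow_smul]
        have hminor : ((pad M S d').updateRow a (fun j => if a = j then 1 else 0)).det
            = (pad M (S.erase a) d').det := by
          rw [← det_updateCol_of_row_single _ a (by
            intro j; rw [Matrix.updateRow_self])]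
          rw [updateRC_eq]
        have h1 : 0 < (pad M S d').det := by
          apply ihT d' hd'nonneg
          intro i hi hne
          have hia : i ≠ a := by
            intro h'; subst h'; exact hne hd'a
          rw [hd'val i hia] at hne
          have := hsupp i hi hne
          rcases Finset.mem_insert.mp this with h' | h'
          · exact absurd h' hia
          · exact h'
        have h2 : 0 < (pad M (S.erase a) d').det := by
          apply ih (S.erase a) (Finset.erase_ssubset haS) d'
          intro i hi
          exact hd'nonneg i (Finset.mem_of_mem_erase hi)
        rw [hsplit, hminor]
        positivity
      · apply ihT d hd
        intro i hi hne
        rcases Finset.mem_insert.mp (hsupp i hi hne) with h' | h'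
        · exact absurd ⟨h' ▸ hi, h' ▸ hne⟩ hda
        · exact h'
  exact key S d hd (fun i hi _ => hi)

end MetzlerAux


open MetzlerAux in
/-- If `A` is Metzler (cooperative) and all principal minors of `-A` are
positive, then every eigenvalue of `A` has negative real part. -/
theorem metzler_minors_pos_implies_stable
    {n : ℕ} (A : Matrix (Fin n) (Fin n) ℝ)
    (hMetzler : ∀ i j : Fin n, i ≠ j → 0 ≤ A i j)
    (hminors : ∀ S : Finset (Fin n), S.Nonempty →
      0 < ((-A).submatrix (Subtype.val : {x // x ∈ S} → Fin n)
            (Subtype.val : {x // x ∈ S} → Fin n)).det) :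
    ∀ μ : ℂ, (μ • (1 : Matrix (Fin n) (Fin n) ℂ)
      - A.map (Complex.ofReal ·)).det = 0 → μ.re < 0 := by
  classical
  intro μ hdet
  by_contra hre
  push_neg at hre
  obtain ⟨v, hv0, hv⟩ := Matrix.exists_mulVec_eq_zero_iff.mpr hdet
  have hAv : (A.map (Complex.ofReal ·)) *ᵥ v = μ • v := by
    have h1 : (μ • (1 : Matrix (Fin n) (Fin n) ℂ)) *ᵥ v
        - (A.map (Complex.ofReal ·)) *ᵥ v = 0 := by
      rw [← Matrix.sub_mulVec]; exact hv
    have h2 : (μ • (1 : Matrix (Fin n) (Fin n) ℂ)) *ᵥ v = μ • v := by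
      rw [Matrix.smul_mulVec, Matrix.one_mulVec]
    rw [h2] at h1
    exact (sub_eq_zero.mp h1).symm
  set c : ℝ := ∑ i, |A i i| with hc
  have hc0 : 0 ≤ c := Finset.sum_nonneg fun i _ => abs_nonneg _
  have hcA : ∀ i, 0 ≤ A i i + c := by
    intro i
    have h1 : |A i i| ≤ c :=
      Finset.single_le_sum (fun j _ => abs_nonneg (A j j)) (Finset.mem_univ i)
    have h2 := neg_abs_le (A i i)
    linarith
  set x : Fin n → ℝ := fun i => ‖v i‖ with hxdef
  have hx0 : ∀ i, 0 ≤ x i := fun i => norm_nonneg _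
  have hAx : ∀ i, 0 ≤ (A.mulVec x) i := by
    intro i
    have h1 : ∑ j, ((A i j : ℂ)) * v j = μ * v i := by
      have := congrFun hAv i
      simpa [Matrix.mulVec, dotProduct, Matrix.map_apply] using this
    have h2 : ((μ + (c:ℂ)) * v i) =
        ∑ j, (((A i j + if i = j then c else 0 : ℝ) : ℂ)) * v j := by
      have hδ : ∑ j, ((if i = j then (c:ℂ) else 0)) * v j = (c:ℂ) * v i := by
        rw [Finset.sum_congr rfl (fun j _ => ite_mul (i = j) (c:ℂ) 0 (v j))]
        simp [Finset.sum_ite_eq]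
      calc (μ + (c:ℂ)) * v i = μ * v i + (c:ℂ) * v i := by ring
        _ = ∑ j, ((A i j : ℂ)) * v j + ∑ j, ((if i = j then (c:ℂ) else 0)) * v j := by
            rw [h1, hδ]
        _ = ∑ j, (((A i j : ℂ)) + (if i = j then (c:ℂ) else 0)) * v j := by
            rw [← Finset.sum_add_distrib]
            exact Finset.sum_congr rfl fun j _ => by ring
        _ = ∑ j, (((A i j + if i = j then c else 0 : ℝ) : ℂ)) * v j := by
            refine Finset.sum_congr rfl fun j _ => ?_
            push_cast
            split_ifs <;> simp
    have hent : ∀ j, 0 ≤ A i j + if i = j then c else 0 := by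
      intro j
      by_cases hij : i = j
      · subst hij; simpa using hcA i
      · simpa [hij] using hMetzler i j hij
    have hbound : ‖μ + (c:ℂ)‖ * x i ≤
        ∑ j, (A i j + if i = j then c else 0) * x j := by
      rw [← norm_mul, h2]
      refine le_trans (norm_sum_le _ _) ?_
      refine Finset.sum_le_sum fun j _ => ?_
      rw [norm_mul, Complex.norm_real, Real.norm_eq_abs, abs_of_nonneg (hent j)]
    have habs : c ≤ ‖μ + (c:ℂ)‖ := by
      have := Complex.re_le_norm (μ + (c:ℂ))
      simp only [Complex.add_re, Complex.ofReal_re] at this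
      linarith
    have hsum : ∑ j, (A i j + if i = j then c else 0) * x j
        = (A.mulVec x) i + c * x i := by
      rw [Finset.sum_congr rfl (fun j _ => add_mul (A i j) _ (x j)),
        Finset.sum_add_distrib]
      congr 1
      rw [Finset.sum_congr rfl (fun j _ => ite_mul (i = j) c 0 (x j))]
      simp [Finset.sum_ite_eq]
    have hcx : c * x i ≤ ‖μ + (c:ℂ)‖ * x i :=
      mul_le_mul_of_nonneg_right habs (hx0 i)
    rw [hsum] at hbound
    linarith
  have hMx : ∀ i, ((-A).mulVec x) i ≤ 0 := by
    intro i
    rw [Matrix.neg_mulVec]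
    simpa using hAx i
  set S : Finset (Fin n) := Finset.univ.filter (fun i => x i ≠ 0) with hSdef
  have hmemS : ∀ i, i ∈ S ↔ x i ≠ 0 := by
    intro i; simp [hSdef]
  obtain ⟨i₀, hi₀⟩ := Function.ne_iff.mp hv0
  have hi₀S : i₀ ∈ S := (hmemS i₀).mpr (by
    simp only [hxdef]
    exact norm_ne_zero_iff.mpr hi₀)
  set d : Fin n → ℝ := fun i => if x i = 0 then 0 else -(((-A).mulVec x) i) / x i
    with hddef
  have hd : ∀ i ∈ S, 0 ≤ d i := by
    intro i hi
    have hxi : x i ≠ 0 := (hmemS i).mp hi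
    have hxipos : 0 < x i := lt_of_le_of_ne (hx0 i) (Ne.symm hxi)
    simp only [hddef, if_neg hxi]
    exact div_nonneg (neg_nonneg.mpr (hMx i)) (le_of_lt hxipos)
  have hker : (pad (-A) S d).mulVec x = 0 := by
    funext i
    by_cases hi : i ∈ S
    · have hxi : x i ≠ 0 := (hmemS i).mp hi
      have hpadrow : ∀ j, pad (-A) S d i j =
          (if j ∈ S then (-A) i j else 0) + (if i = j then d i else 0) := by
        intro j
        simp only [pad, hi, true_and]
        congr 1
      have : (pad (-A) S d).mulVec x i
          = ∑ j, ((if j ∈ S then (-A) i j else 0) * x j + (if i = j then d i else 0) * x j) := by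
        simp only [Matrix.mulVec, dotProduct]
        exact Finset.sum_congr rfl fun j _ => by rw [hpadrow j, add_mul]
      rw [this, Finset.sum_add_distrib]
      have hfirst : ∑ j, (if j ∈ S then (-A) i j else 0) * x j = ((-A).mulVec x) i := by
        simp only [Matrix.mulVec, dotProduct]
        refine Finset.sum_congr rfl fun j _ => ?_
        by_cases hj : j ∈ S
        · rw [if_pos hj]
        · have hxj : x j = 0 := by
            by_contra hne
            exact hj ((hmemS j).mpr hne)
          rw [if_neg hj, hxj, mul_zero, mul_zero]
      have hsecond : ∑ j, (if i = j then d i else 0) * x j = d i * x i := by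
        rw [Finset.sum_congr rfl (fun j _ => ite_mul (i = j) (d i) 0 (x j))]
        simp [Finset.sum_ite_eq]
      rw [hfirst, hsecond]
      simp only [hddef, if_neg hxi]
      rw [div_mul_cancel₀ _ hxi]
      simp
    · have hxi : x i = 0 := by
        by_contra hne
        exact hi ((hmemS i).mpr hne)
      have hpadrow : ∀ j, pad (-A) S d i j = (if i = j then 1 else 0) := by
        intro j
        simp only [pad, hi, false_and, if_false, if_neg hi, zero_add]
      have : (pad (-A) S d).mulVec x i = ∑ j, (if i = j then 1 else 0) * x j := by
        simp only [Matrix.mulVec, dotProduct]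
        exact Finset.sum_congr rfl fun j _ => by rw [hpadrow j]
      rw [this, Finset.sum_congr rfl (fun j _ => ite_mul (i = j) (1:ℝ) 0 (x j))]
      simp [Finset.sum_ite_eq, hxi]
  have hxne : x ≠ 0 := by
    intro h
    exact ((hmemS i₀).mp hi₀S) (by rw [h]; rfl)
  have hdet0 : (pad (-A) S d).det = 0 :=
    Matrix.exists_mulVec_eq_zero_iff.mp ⟨x, hxne, hker⟩
  have hpos : 0 < (pad (-A) S d).det := det_pad_pos (-A) hminors S d hd
  rw [hdet0] at hpos
  exact lt_irrefl 0 hpos
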